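/- Let γ ∈ (-1/2, 0), k a positive integer, M ≥ 2 an integer, ρ := √(k² - γ²), and μ := M / (√(ρ² + γ²) - √((M+ρ)² + γ²)). Then μ + 1 < 0 and μ + M/(M-1) > 0. -/

import Mathlib

/-- Sign conditions for `k > 0`, `M ≥ 2`: `μ + 1 < 0` and `μ + M/(M-1) > 0`. -/
theorem stmt9 (γ : ℝ) (hγ : γ ∈ Set.Ioo (-(1/2):ℝ) 0)
    (k : ℤ) (hk : 0 < k) (M : ℕ) (hM : 2 ≤ M)
    (ρ μ : ℝ) (hρ : ρ = Real.sqrt ((k:ℝ)^2 - γ^2))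
    (hμ : μ = (M:ℝ) / (Real.sqrt (ρ^2 + γ^2) - Real.sqrt (((M:ℝ)+ρ)^2 + γ^2))) :
    μ + 1 < 0 ∧ 0 < μ + (M:ℝ)/((M:ℝ)-1) := by
  obtain ⟨hγ1, hγ2⟩ := hγ
  have hk1 : (1:ℝ) ≤ (k:ℝ) := by exact_mod_cast hk
  have hM2 : (2:ℝ) ≤ (M:ℝ) := by exact_mod_cast hM
  have hγsq : γ^2 < 1/4 := by nlinarith
  have hγpos : 0 < γ^2 := by
    have : γ ≠ 0 := ne_of_lt hγ2
    positivity
  have hpos : 0 < (k:ℝ)^2 - γ^2 := by nlinarith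
  have hρ0 : 0 ≤ ρ := hρ ▸ Real.sqrt_nonneg _
  have hρ2 : ρ^2 = (k:ℝ)^2 - γ^2 := by rw [hρ]; exact Real.sq_sqrt hpos.le
  have hA : Real.sqrt (ρ^2 + γ^2) = (k:ℝ) := by
    have h : ρ^2 + γ^2 = (k:ℝ)^2 := by rw [hρ2]; ring
    rw [h, Real.sqrt_sq (by linarith)]
  set B := Real.sqrt (((M:ℝ)+ρ)^2 + γ^2) with hB
  have hB0 : 0 ≤ B := Real.sqrt_nonneg _
  have hBsq : B^2 = ((M:ℝ)+ρ)^2 + γ^2 := Real.sq_sqrt (by positivity)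
  -- ρ < k
  have hρk : ρ < (k:ℝ) := by nlinarith
  -- ρ > k - 1
  have hρk1 : (k:ℝ) - 1 < ρ := by nlinarith
  -- B < k + M
  have hB1 : B < (k:ℝ) + (M:ℝ) := by
    rw [hB, show ((M:ℝ)+ρ)^2 + γ^2 = (M:ℝ)^2 + 2*(M:ℝ)*ρ + (ρ^2 + γ^2) by ring]
    refine (Real.sqrt_lt' (by linarith)).2 ?_
    nlinarith
  -- B > k + M - 1
  have hB2 : (k:ℝ) + (M:ℝ) - 1 < B := by
    rw [hB]
    refine (Real.lt_sqrt (by linarith)).2 ?_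
    nlinarith
  have hd : Real.sqrt (ρ^2 + γ^2) - B < 0 := by rw [hA]; linarith
  rw [hμ, hA]
  have hMpos : (0:ℝ) < (M:ℝ) := by linarith
  have hkB : (k:ℝ) - B < 0 := by linarith
  have hne : (k:ℝ) - B ≠ 0 := ne_of_lt hkB
  have hM1 : (0:ℝ) < (M:ℝ) - 1 := by linarith
  constructor
  · have h1 : (M:ℝ) / ((k:ℝ) - B) + 1 = ((M:ℝ) + ((k:ℝ) - B)) / ((k:ℝ) - B) := by
      field_simp
    rw [h1]
    exact div_neg_of_pos_of_neg (by linarith) hkB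
  · have h2 : (M:ℝ) / ((k:ℝ) - B) + (M:ℝ)/((M:ℝ)-1)
        = ((M:ℝ) * (((M:ℝ)-1) + ((k:ℝ) - B))) / (((k:ℝ) - B) * ((M:ℝ)-1)) := by
      field_simp
    rw [h2]
    exact div_pos_of_neg_of_neg
      (mul_neg_of_pos_of_neg (by linarith) (by linarith))
      (mul_neg_of_neg_of_pos hkB hM1)
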